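/- Define w(n,i) := 4(n+1)(n−i)(n−i−1)(i−1)/(n(n−1)²·i²(i+1)²(i+2)(i+3)) and u(n,i1,i2) := 4(n+1)(i1−1)(n−i2)(n−i2−1)/(n(n−1)²·i1(i1+1)·i2(i2+1)(i2+2)(i2+3)). Then the sequence s_n := ∑_{i=1}^{n−1} w(n,i) + 2·∑_{1 ≤ i1 < i2 ≤ n−1} u(n,i1,i2), defined for integers n ≥ 2, converges as n → ∞ to 179/54 − π²/3. -/

import Mathlib

open Filter

/-- `w(n,i) = Var(V_i^{(n)})`. -/
noncomputable def wVar (n i : ℝ) : ℝ :=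
  4 * (n + 1) * (n - i) * (n - i - 1) * (i - 1) /
    (n * (n - 1) ^ 2 * i ^ 2 * (i + 1) ^ 2 * (i + 2) * (i + 3))

/-- `u(n,i1,i2) = Cov(V_{i1}^{(n)}, V_{i2}^{(n)})`. -/
noncomputable def uCov (n i1 i2 : ℝ) : ℝ :=
  4 * (n + 1) * (i1 - 1) * (n - i2) * (n - i2 - 1) /
    (n * (n - 1) ^ 2 * i1 * (i1 + 1) * i2 * (i2 + 1) * (i2 + 2) * (i2 + 3))

/- ### Auxiliary definitions -/

/-- Partial sums of the harmonic series. -/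
noncomputable def hh1 (m : ℕ) : ℝ := ∑ i ∈ Finset.Icc 1 m, (1 : ℝ) / (i : ℝ)

/-- Partial sums of `∑ 1/i²`. -/
noncomputable def hh2 (m : ℕ) : ℝ := ∑ i ∈ Finset.Icc 1 m, (1 : ℝ) / (i : ℝ) ^ 2

/-- `B(x,i) = (x-i)(x-i-1)/(i(i+1)(i+2)(i+3))`. -/
noncomputable def Bf (x : ℝ) (i : ℕ) : ℝ :=
  (x - i) * (x - i - 1) / (i * (i + 1) * (i + 2) * (i + 3))

/-- `g_w(x,i) = (x-i)(x-i-1)(i-1)/(i²(i+1)²(i+2)(i+3))`. -/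
noncomputable def gw (x : ℝ) (i : ℕ) : ℝ :=
  (x - i) * (x - i - 1) * ((i : ℝ) - 1) /
    ((i : ℝ) ^ 2 * ((i : ℝ) + 1) ^ 2 * ((i : ℝ) + 2) * ((i : ℝ) + 3))

/-- `A(i) = (i-1)/(i(i+1))`. -/
noncomputable def Af (i : ℕ) : ℝ := ((i : ℝ) - 1) / ((i : ℝ) * ((i : ℝ) + 1))

/-- Closed form for `∑_{i=1}^m B(x,i)` with `y = m`. -/
noncomputable def Tf (x y : ℝ) : ℝ :=
  (x - x ^ 2) / (6 * (y + 1)) + (2 * x + x ^ 2) / (3 * (y + 2))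
    - (6 + 5 * x + x ^ 2) / (6 * (y + 3)) + (x ^ 2 - 4 * x + 6) / 18

/-- Closed form for `∑_{i=1}^m g_w(x,i)` with `y = m`, `a = H₁(m)`, `b = H₂(m)`. -/
noncomputable def FWf (x y a b : ℝ) : ℝ :=
  -(5 * x + 7 * x ^ 2) / 6 * b + (-x - x ^ 2) / (y + 1) ^ 2
    + (6 + 11 * x - 23 * x ^ 2) / (36 * (y + 1))
    - (30 + 61 * x + 23 * x ^ 2) / (36 * (y + 2))
    + (6 + 5 * x + x ^ 2) / (9 * (y + 3)) + (6 + 293 * x + 415 * x ^ 2) / 216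

/-- Closed form for `∑_{i=1}^m A(i)·T(x,i)`. -/
noncomputable def FATf (x y a b : ℝ) : ℝ :=
  (x ^ 2 - 4 * x + 6) / 18 * a + (x - x ^ 2) / 3 * b + (x - x ^ 2) / (3 * (y + 1) ^ 2)
    + (x ^ 2 - 4 * x + 6) / (18 * (y + 1)) + (12 - 8 * x - 7 * x ^ 2) / (18 * (y + 2))
    + (6 + 5 * x + x ^ 2) / (9 * (y + 3)) + (-96 - 8 * x + 47 * x ^ 2) / 108

/-- The simplified closed form of the whole variance. -/
noncomputable def Gf (n : ℕ) : ℝ :=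
  (179 * (n : ℝ) ^ 3 + 767 * (n : ℝ) ^ 2 + 900 * (n : ℝ) + 468)
      / (54 * (n : ℝ) ^ 2 * ((n : ℝ) - 1))
    - 8 * hh1 (n - 1) / (3 * (n : ℝ) * ((n : ℝ) - 1) ^ 2)
    - 2 * ((n : ℝ) + 1) * ((n : ℝ) + 3) * hh2 (n - 1) / ((n : ℝ) - 1) ^ 2

/- ### Harmonic number recursions -/

lemma hh1_succ (m : ℕ) : hh1 (m + 1) = hh1 m + 1 / ((m : ℝ) + 1) := by
  rw [hh1, hh1, Finset.sum_Icc_succ_top (Nat.succ_le_succ (Nat.zero_le m))]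
  push_cast; ring

lemma hh2_succ (m : ℕ) : hh2 (m + 1) = hh2 m + 1 / ((m : ℝ) + 1) ^ 2 := by
  rw [hh2, hh2, Finset.sum_Icc_succ_top (Nat.succ_le_succ (Nat.zero_le m))]
  push_cast; ring

lemma hh1_zero : hh1 0 = 0 := by simp [hh1]
lemma hh2_zero : hh2 0 = 0 := by simp [hh2]

lemma hh1_nonneg (m : ℕ) : 0 ≤ hh1 m := by
  apply Finset.sum_nonneg; intro i _; positivity

lemma hh1_le (m : ℕ) : hh1 m ≤ m := by
  calc hh1 m ≤ ∑ i ∈ Finset.Icc 1 m, (1 : ℝ) := by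
        apply Finset.sum_le_sum
        intro i hi
        rw [Finset.mem_Icc] at hi
        have h1 : (1 : ℝ) ≤ (i : ℝ) := by exact_mod_cast hi.1
        rw [div_le_one (by linarith)]; linarith
    _ = m := by simp

/- ### Summation identities (induction on the upper limit) -/

lemma cast_facts (m : ℕ) : (0:ℝ) ≤ (m:ℝ) := Nat.cast_nonneg m

lemma sumB (x : ℝ) (m : ℕ) : ∑ i ∈ Finset.Icc 1 m, Bf x i = Tf x m := by
  induction m with
  | zero => norm_num [Tf]; ring
  | succ m ih =>
    rw [Finset.sum_Icc_succ_top (Nat.succ_le_succ (Nat.zero_le m)), ih]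
    have hy : (0:ℝ) ≤ (m:ℝ) := Nat.cast_nonneg m
    unfold Tf Bf
    push_cast
    have h1 : (m:ℝ) + 1 ≠ 0 := by linarith
    have h2 : (m:ℝ) + 2 ≠ 0 := by linarith
    have h3 : (m:ℝ) + 3 ≠ 0 := by linarith
    have h4 : (m:ℝ) + 4 ≠ 0 := by linarith
    field_simp
    ring

lemma sumW (x : ℝ) (m : ℕ) :
    ∑ i ∈ Finset.Icc 1 m, gw x i = FWf x m (hh1 m) (hh2 m) := by
  induction m with
  | zero => rw [hh1_zero, hh2_zero]; norm_num [FWf]; ring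
  | succ m ih =>
    rw [Finset.sum_Icc_succ_top (Nat.succ_le_succ (Nat.zero_le m)), ih, hh1_succ, hh2_succ]
    have hy : (0:ℝ) ≤ (m:ℝ) := Nat.cast_nonneg m
    unfold FWf gw
    push_cast
    have h1 : (m:ℝ) + 1 ≠ 0 := by linarith
    have h2 : (m:ℝ) + 2 ≠ 0 := by linarith
    have h3 : (m:ℝ) + 3 ≠ 0 := by linarith
    have h4 : (m:ℝ) + 4 ≠ 0 := by linarith
    field_simp
    ring

lemma sumA (m : ℕ) :
    ∑ i ∈ Finset.Icc 1 m, Af i = hh1 m + 2 / ((m : ℝ) + 1) - 2 := by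
  induction m with
  | zero => rw [hh1_zero]; norm_num [Af]
  | succ m ih =>
    rw [Finset.sum_Icc_succ_top (Nat.succ_le_succ (Nat.zero_le m)), ih, hh1_succ]
    have hy : (0:ℝ) ≤ (m:ℝ) := Nat.cast_nonneg m
    unfold Af
    push_cast
    have h1 : (m:ℝ) + 1 ≠ 0 := by linarith
    have h2 : (m:ℝ) + 2 ≠ 0 := by linarith
    field_simp
    ring

lemma sumAT (x : ℝ) (m : ℕ) :
    ∑ i ∈ Finset.Icc 1 m, Af i * Tf x i = FATf x m (hh1 m) (hh2 m) := by
  induction m with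
  | zero => rw [hh1_zero, hh2_zero]; norm_num [FATf]; ring
  | succ m ih =>
    rw [Finset.sum_Icc_succ_top (Nat.succ_le_succ (Nat.zero_le m)), ih, hh1_succ, hh2_succ]
    have hy : (0:ℝ) ≤ (m:ℝ) := Nat.cast_nonneg m
    unfold FATf Af Tf
    push_cast
    have h1 : (m:ℝ) + 1 ≠ 0 := by linarith
    have h2 : (m:ℝ) + 2 ≠ 0 := by linarith
    have h3 : (m:ℝ) + 3 ≠ 0 := by linarith
    have h4 : (m:ℝ) + 4 ≠ 0 := by linarith
    field_simp
    ring

/- ### Pointwise factorizations -/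

lemma wVar_eq (x : ℝ) (hx0 : x ≠ 0) (hx1 : x - 1 ≠ 0) {i : ℕ} (hi : 1 ≤ i) :
    wVar x i = 4 * (x + 1) / (x * (x - 1) ^ 2) * gw x i := by
  have hi' : (1:ℝ) ≤ (i:ℝ) := by exact_mod_cast hi
  have h1 : (i:ℝ) ≠ 0 := by linarith
  have h2 : (i:ℝ) + 1 ≠ 0 := by linarith
  have h3 : (i:ℝ) + 2 ≠ 0 := by linarith
  have h4 : (i:ℝ) + 3 ≠ 0 := by linarith
  unfold wVar gw
  field_simp

lemma uCov_eq (x : ℝ) (hx0 : x ≠ 0) (hx1 : x - 1 ≠ 0) {i1 i2 : ℕ} (hi1 : 1 ≤ i1)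
    (hi2 : 1 ≤ i2) :
    uCov x i1 i2 = 4 * (x + 1) / (x * (x - 1) ^ 2) * Af i1 * Bf x i2 := by
  have hi1' : (1:ℝ) ≤ (i1:ℝ) := by exact_mod_cast hi1
  have hi2' : (1:ℝ) ≤ (i2:ℝ) := by exact_mod_cast hi2
  have h1 : (i1:ℝ) ≠ 0 := by linarith
  have h2 : (i1:ℝ) + 1 ≠ 0 := by linarith
  have h3 : (i2:ℝ) ≠ 0 := by linarith
  have h4 : (i2:ℝ) + 1 ≠ 0 := by linarith
  have h5 : (i2:ℝ) + 2 ≠ 0 := by linarith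
  have h6 : (i2:ℝ) + 3 ≠ 0 := by linarith
  unfold uCov Af Bf
  field_simp

/- ### The key algebraic identity -/

lemma key (x a b : ℝ) (hx0 : x ≠ 0) (hx1 : x - 1 ≠ 0) (hx2 : x + 1 ≠ 0)
    (hx3 : x + 2 ≠ 0) :
    4 * (x + 1) / (x * (x - 1) ^ 2) * FWf x (x - 1) a b +
      2 * (4 * (x + 1) / (x * (x - 1) ^ 2) *
        (Tf x (x - 1) * (a + 2 / x - 2) - FATf x (x - 1) a b)) =
    (179 * x ^ 3 + 767 * x ^ 2 + 900 * x + 468) / (54 * x ^ 2 * (x - 1))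
      - 8 * a / (3 * x * (x - 1) ^ 2)
      - 2 * (x + 1) * (x + 3) * b / (x - 1) ^ 2 := by
  unfold FWf Tf FATf
  have hy1 : x - 1 + 1 ≠ 0 := by intro h; exact hx0 (by linarith)
  have hy2 : x - 1 + 2 ≠ 0 := by intro h; exact hx2 (by linarith)
  have hy3 : x - 1 + 3 ≠ 0 := by intro h; exact hx3 (by linarith)
  field_simp
  ring

/- ### Splitting the inner sum -/

lemma nat_Icc_one (m : ℕ) : Finset.Icc 1 m = Finset.Ioc 0 m := Finset.Icc_add_one_left_eq_Ioc 0 m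

lemma sumB_split (x : ℝ) {a b : ℕ} (h : a ≤ b) :
    ∑ i ∈ Finset.Icc (a + 1) b, Bf x i = Tf x b - Tf x a := by
  have hsplit : (∑ i ∈ Finset.Ioc 0 a, Bf x i) + ∑ i ∈ Finset.Ioc a b, Bf x i
      = ∑ i ∈ Finset.Ioc 0 b, Bf x i :=
    Finset.sum_Ioc_consecutive _ (Nat.zero_le a) h
  rw [← nat_Icc_one, ← nat_Icc_one, sumB, sumB] at hsplit
  rw [Finset.Icc_add_one_left_eq_Ioc]
  linarith

/- ### The exact closed form of the variance for `n ≥ 2` -/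

lemma Sval (n : ℕ) (hn : 2 ≤ n) :
    ((∑ i ∈ Finset.Icc 1 (n - 1), wVar n i) +
      2 * ∑ i1 ∈ Finset.Icc 1 (n - 1), ∑ i2 ∈ Finset.Icc (i1 + 1) (n - 1), uCov n i1 i2)
    = Gf n := by
  have hx2 : (2:ℝ) ≤ (n:ℝ) := by exact_mod_cast hn
  set x := (n : ℝ) with hxdef
  have hx0 : x ≠ 0 := by linarith
  have hx1 : x - 1 ≠ 0 := by linarith
  have hxp1 : x + 1 ≠ 0 := by linarith
  have hxp2 : x + 2 ≠ 0 := by linarith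
  have hn1 : 1 ≤ n := le_trans one_le_two hn
  have hNcast : ((n - 1 : ℕ) : ℝ) = x - 1 := by
    rw [Nat.cast_sub hn1, Nat.cast_one]
  set K := 4 * (x + 1) / (x * (x - 1) ^ 2) with hK
  set a := hh1 (n - 1)
  set b := hh2 (n - 1)
  have hW : (∑ i ∈ Finset.Icc 1 (n - 1), wVar x i) = K * FWf x (x - 1) a b := by
    rw [Finset.sum_congr rfl fun i hi => wVar_eq x hx0 hx1 (Finset.mem_Icc.mp hi).1,
      ← Finset.mul_sum, sumW, hNcast]
  have hInner : ∀ i1 ∈ Finset.Icc 1 (n - 1),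
      (∑ i2 ∈ Finset.Icc (i1 + 1) (n - 1), uCov x i1 i2)
        = K * (Tf x (x - 1) * Af i1 - Af i1 * Tf x i1) := by
    intro i1 hi1
    obtain ⟨hi1a, hi1b⟩ := Finset.mem_Icc.mp hi1
    have e1 : (∑ i2 ∈ Finset.Icc (i1 + 1) (n - 1), uCov x i1 i2)
        = ∑ i2 ∈ Finset.Icc (i1 + 1) (n - 1), (K * Af i1) * Bf x i2 := by
      refine Finset.sum_congr rfl fun i2 hi2 => ?_
      have h2 : 1 ≤ i2 := by
        have := (Finset.mem_Icc.mp hi2).1; omega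
      rw [uCov_eq x hx0 hx1 hi1a h2, hK]
    rw [e1, ← Finset.mul_sum, sumB_split x hi1b, hNcast]
    ring
  rw [hW, Finset.sum_congr rfl hInner, ← Finset.mul_sum, Finset.sum_sub_distrib,
    ← Finset.mul_sum, sumA, sumAT]
  rw [hNcast, show x - 1 + 1 = x by ring]
  have := key x a b hx0 hx1 hxp1 hxp2
  rw [Gf, ← hxdef, ← hNcast, Nat.cast_sub hn1, Nat.cast_one, ← this, hK]

/- ### Limits -/

lemma tendsto_hh2 : Tendsto (fun m : ℕ => hh2 m) atTop (nhds (Real.pi ^ 2 / 6)) := by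
  have h := hasSum_zeta_two.tendsto_sum_nat
  have h2 := h.comp (tendsto_add_atTop_nat 1)
  refine h2.congr fun m => ?_
  show ∑ i ∈ Finset.range (m + 1), (1:ℝ) / (i:ℝ) ^ 2 = hh2 m
  rw [hh2]
  have : Finset.range (m + 1) = insert 0 (Finset.Icc 1 m) := by
    ext k
    simp only [Finset.mem_range, Finset.mem_insert, Finset.mem_Icc]
    omega
  rw [this, Finset.sum_insert (by simp)]
  norm_num

lemma tendsto_inv_cast : Tendsto (fun n : ℕ => ((n:ℝ))⁻¹) atTop (nhds 0) :=
  tendsto_inv_atTop_zero.comp tendsto_natCast_atTop_atTop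

lemma tendsto_R :
    Tendsto (fun n : ℕ =>
        (179 * (n : ℝ) ^ 3 + 767 * (n : ℝ) ^ 2 + 900 * (n : ℝ) + 468)
          / (54 * (n : ℝ) ^ 2 * ((n : ℝ) - 1)))
      atTop (nhds (179 / 54)) := by
  have hcont : ContinuousAt (fun t : ℝ =>
      (179 + 767 * t + 900 * t ^ 2 + 468 * t ^ 3) / (54 * (1 - t))) 0 := by
    apply ContinuousAt.div
    · fun_prop
    · fun_prop
    · norm_num
  have h0 : ((179:ℝ) + 767 * 0 + 900 * 0 ^ 2 + 468 * 0 ^ 3) / (54 * (1 - 0)) = 179 / 54 := by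
    norm_num
  have h := (hcont.tendsto.comp tendsto_inv_cast)
  rw [h0] at h
  apply h.congr'
  filter_upwards [eventually_ge_atTop 2] with n hn
  have hx2 : (2:ℝ) ≤ (n:ℝ) := by exact_mod_cast hn
  have hx0 : (n:ℝ) ≠ 0 := by linarith
  have hx1 : (n:ℝ) - 1 ≠ 0 := by linarith
  show (179 + 767 * ((n:ℝ))⁻¹ + 900 * ((n:ℝ))⁻¹ ^ 2 + 468 * ((n:ℝ))⁻¹ ^ 3)
      / (54 * (1 - ((n:ℝ))⁻¹)) = _
  rw [eq_div_iff (by positivity : (54:ℝ) * (n:ℝ) ^ 2 * ((n:ℝ) - 1) ≠ 0)]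
  have hinv : (1:ℝ) - ((n:ℝ))⁻¹ = ((n:ℝ) - 1) / (n:ℝ) := by
    field_simp
  field_simp

lemma tendsto_c2 :
    Tendsto (fun n : ℕ => 2 * ((n : ℝ) + 1) * ((n : ℝ) + 3) / ((n : ℝ) - 1) ^ 2)
      atTop (nhds 2) := by
  have hcont : ContinuousAt (fun t : ℝ =>
      2 * (1 + t) * (1 + 3 * t) / (1 - t) ^ 2) 0 := by
    apply ContinuousAt.div
    · fun_prop
    · fun_prop
    · norm_num
  have h := (hcont.tendsto.comp tendsto_inv_cast)
  have h0 : (2:ℝ) * (1 + 0) * (1 + 3 * 0) / (1 - 0) ^ 2 = 2 := by norm_num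
  rw [h0] at h
  apply h.congr'
  filter_upwards [eventually_ge_atTop 2] with n hn
  have hx2 : (2:ℝ) ≤ (n:ℝ) := by exact_mod_cast hn
  have hx0 : (n:ℝ) ≠ 0 := by linarith
  have hx1 : (n:ℝ) - 1 ≠ 0 := by linarith
  show (2 * (1 + ((n:ℝ))⁻¹) * (1 + 3 * ((n:ℝ))⁻¹)) / (1 - ((n:ℝ))⁻¹) ^ 2 = _
  rw [div_eq_div_iff]
  · field_simp
  · have : (1:ℝ) - ((n:ℝ))⁻¹ = ((n:ℝ) - 1) / (n:ℝ) := by field_simp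
    rw [this]
    positivity
  · positivity

lemma tendsto_h1term :
    Tendsto (fun n : ℕ => 8 * hh1 (n - 1) / (3 * (n : ℝ) * ((n : ℝ) - 1) ^ 2))
      atTop (nhds 0) := by
  have hg : Tendsto (fun n : ℕ => 8 / (3 * ((n : ℝ) - 1))) atTop (nhds 0) := by
    have h1 : Tendsto (fun n : ℕ => 3 * ((n : ℝ) - 1)) atTop atTop := by
      apply Tendsto.const_mul_atTop (by norm_num : (0:ℝ) < 3)
      exact tendsto_atTop_add_const_right _ _ tendsto_natCast_atTop_atTop
    have h2 := (tendsto_inv_atTop_zero.comp h1).const_mul (8:ℝ)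
    rw [mul_zero] at h2
    refine h2.congr fun k => ?_
    simp only [Function.comp_apply]
    rw [div_eq_mul_inv]
  apply squeeze_zero' ?_ ?_ hg
  · filter_upwards [eventually_ge_atTop 2] with n hn
    have hx2 : (2:ℝ) ≤ (n:ℝ) := by exact_mod_cast hn
    have h0 := hh1_nonneg (n - 1)
    have hd : (0:ℝ) < 3 * (n:ℝ) * ((n:ℝ) - 1) ^ 2 := by nlinarith
    exact div_nonneg (by nlinarith) (le_of_lt hd)
  · filter_upwards [eventually_ge_atTop 2] with n hn
    have hx2 : (2:ℝ) ≤ (n:ℝ) := by exact_mod_cast hn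
    have hn1 : 1 ≤ n := by omega
    have hle : hh1 (n - 1) ≤ (n:ℝ) - 1 := by
      have := hh1_le (n - 1)
      rwa [Nat.cast_sub hn1, Nat.cast_one] at this
    have hpos : (0:ℝ) < 3 * (n:ℝ) * ((n:ℝ) - 1) ^ 2 := by nlinarith
    rw [div_le_div_iff₀ hpos (by linarith : (0:ℝ) < 3 * ((n:ℝ) - 1))]
    nlinarith [hh1_nonneg (n - 1)]

/-- `Var(∑_{i=1}^{n−1} V_i^{(n)}) → 179/54 − π²/3` as `n → ∞`. -/
theorem stmt8 :
    Tendsto (fun n : ℕ =>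
        (∑ i ∈ Finset.Icc 1 (n - 1), wVar n i) +
          2 * ∑ i1 ∈ Finset.Icc 1 (n - 1), ∑ i2 ∈ Finset.Icc (i1 + 1) (n - 1), uCov n i1 i2)
      atTop (nhds (179 / 54 - Real.pi ^ 2 / 3)) := by
  have hbasel : Tendsto (fun n : ℕ => hh2 (n - 1)) atTop (nhds (Real.pi ^ 2 / 6)) :=
    tendsto_hh2.comp (tendsto_sub_atTop_nat 1)
  have h3 : Tendsto (fun n : ℕ =>
      2 * ((n : ℝ) + 1) * ((n : ℝ) + 3) * hh2 (n - 1) / ((n : ℝ) - 1) ^ 2)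
      atTop (nhds (Real.pi ^ 2 / 3)) := by
    have h := tendsto_c2.mul hbasel
    rw [show (2:ℝ) * (Real.pi ^ 2 / 6) = Real.pi ^ 2 / 3 by ring] at h
    exact h.congr fun n => by ring
  have hG : Tendsto Gf atTop (nhds (179 / 54 - Real.pi ^ 2 / 3)) := by
    have h := (tendsto_R.sub tendsto_h1term).sub h3
    rw [sub_zero] at h
    exact h
  refine hG.congr' ?_
  filter_upwards [eventually_ge_atTop 2] with n hn
  exact (Sval n hn).symm
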